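/- Let F_1, ..., F_m be points in ℝ², F_i one of them with multiplicity k_i, and F(Y) = Σ_{j=1}^m ‖Y - F_j‖. Then for every direction v ∈ ℝ², the one-sided directional derivative of F at F_i in direction v equals k_i‖v‖ + ⟨v, N_i⟩, where N_i = - Σ_{F_j ≠ F_i} (F_j - F_i)/‖F_j - F_i‖. -/

import Mathlib

open scoped Classical

open Filter Topology

theorem weissfeld_directional_derivative (m : ℕ) (F : Fin m → EuclideanSpace ℝ (Fin 2))
    (i₀ : Fin m) (k : ℕ) (hk : k = (Finset.univ.filter (fun j => F j = F i₀)).card)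
    (N : EuclideanSpace ℝ (Fin 2))
    (hN : N = - ∑ j ∈ Finset.univ.filter (fun j => F j ≠ F i₀),
        (‖F j - F i₀‖⁻¹ : ℝ) • (F j - F i₀))
    (v : EuclideanSpace ℝ (Fin 2)) :
    Tendsto (fun t : ℝ =>
        ((∑ j, ‖(F i₀ + t • v) - F j‖) - ∑ j, ‖F i₀ - F j‖) / t)
      (𝓝[>] 0) (𝓝 ((k : ℝ) * ‖v‖ + inner ℝ v N)) := by
  have key : ∀ j : Fin m, Tendsto (fun t : ℝ => (‖(F i₀ + t • v) - F j‖ - ‖F i₀ - F j‖) / t)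
      (𝓝[>] (0:ℝ))
      (𝓝 (if F j = F i₀ then ‖v‖ else
        (inner ℝ v ((‖F i₀ - F j‖⁻¹ : ℝ) • (F i₀ - F j)) : ℝ))) := by
    intro j
    by_cases h : F j = F i₀
    · rw [if_pos h]
      refine tendsto_const_nhds.congr' ?_
      filter_upwards [self_mem_nhdsWithin] with t ht
      have ht' : (0:ℝ) < t := ht
      rw [h, add_sub_cancel_left, sub_self, norm_zero, sub_zero, norm_smul,
        Real.norm_eq_abs, abs_of_pos ht', mul_comm, mul_div_assoc, div_self ht'.ne', mul_one]
    · rw [if_neg h]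
      set x : EuclideanSpace ℝ (Fin 2) := F i₀ - F j with hxdef
      have hx : x ≠ 0 := sub_ne_zero.2 fun hh => h hh.symm
      have hg : HasDerivAt (fun t : ℝ => x + t • v) v 0 := by
        simpa using (((hasDerivAt_id (0:ℝ)).smul_const v).const_add x)
      have h2 : HasDerivAt (fun t : ℝ => ‖x + t • v‖ ^ 2)
          (2 * (inner ℝ (x + (0:ℝ) • v) v : ℝ)) 0 := hg.norm_sq
      have hne : ‖x + (0:ℝ) • v‖ ^ 2 ≠ 0 := by
        simpa using pow_ne_zero 2 (norm_ne_zero_iff.2 hx)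
      have h3 := h2.sqrt hne
      simp only [Real.sqrt_sq (norm_nonneg _), zero_smul, add_zero] at h3
      have hnx : ‖x‖ ≠ 0 := norm_ne_zero_iff.2 hx
      have h4 : HasDerivAt (fun t : ℝ => ‖x + t • v‖)
          ((inner ℝ v ((‖x‖⁻¹ : ℝ) • x) : ℝ)) 0 := by
        convert h3 using 1
        rw [real_inner_smul_right, real_inner_comm]
        field_simp
      have h5 := hasDerivAt_iff_tendsto_slope.1 h4
      have h6 : Tendsto (slope (fun t : ℝ => ‖x + t • v‖) 0) (𝓝[>] (0:ℝ))
          (𝓝 ((inner ℝ v ((‖x‖⁻¹ : ℝ) • x) : ℝ))) :=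
        h5.mono_left (nhdsWithin_mono _ fun t ht => ne_of_gt ht)
      have hv : ∀ t : ℝ, (F i₀ + t • v) - F j = x + t • v := fun t => by
        rw [hxdef]; abel
      refine h6.congr fun t => ?_
      simp only [slope_def_field, sub_zero, zero_smul, add_zero, hv t]
  have hsum := tendsto_finset_sum Finset.univ (fun j (_ : j ∈ Finset.univ) => key j)
  have hfun : (fun t : ℝ =>
        ((∑ j, ‖(F i₀ + t • v) - F j‖) - ∑ j, ‖F i₀ - F j‖) / t)
      = fun t : ℝ => ∑ j, (‖(F i₀ + t • v) - F j‖ - ‖F i₀ - F j‖) / t := by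
    funext t
    rw [← Finset.sum_sub_distrib, Finset.sum_div]
  rw [hfun]
  convert hsum using 2
  rw [Finset.sum_ite, Finset.sum_const, hk, nsmul_eq_mul]
  congr 1
  have hNeq : N = ∑ j ∈ Finset.univ.filter (fun j => ¬ F j = F i₀),
      (‖F i₀ - F j‖⁻¹ : ℝ) • (F i₀ - F j) := by
    rw [hN, ← Finset.sum_neg_distrib]
    refine Finset.sum_congr rfl fun j hj => ?_
    rw [← smul_neg, neg_sub, norm_sub_rev]
  rw [hNeq, inner_sum]
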